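/- arXiv:1504.05739 — 2 statements merged into one kernel-verified Lean document; each statement's English description precedes it below -/
import Mathlib

section
/- Let M = (S, P, μ) be a Markov chain with a reward function r : S → [0,1], and for a BSCC C let MP_C denote the mean payoff of runs ending in C. Let C be the (random) candidate for which the algorithm SinglePathMP terminates and M̂P_C its returned estimate, and let δ_BSCC, δ_C, ε > 0. If ℙ[C ∉ BSCC] ≤ δ_BSCC and ℙ[|M̂P_C − MP_C| > ε | C ∈ BSCC] ≤ δ_C, then ℙ[|M̂P_C − MP_C| > ε] ≤ δ_C + δ_BSCC. In particular, with δ_C = δ_BSCC = δ/2, the algorithm SinglePathMP terminates almost surely and its output is within ε of the mean payoff of the BSCC of the generated run with probability at least 1 − δ. -/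
open MeasureTheory
open scoped ENNReal

namespace SMCPaper

/-- A finite-state discrete-time Markov chain `(S, P, μ)`. -/
structure MC (S : Type*) [Fintype S] where
  P : S → S → ℝ
  μ0 : S → ℝ
  P_nonneg : ∀ s s' : S, 0 ≤ P s s'
  P_row : ∀ s : S, ∑ s' : S, P s s' = 1
  μ0_nonneg : ∀ s : S, 0 ≤ μ0 s
  μ0_sum : ∑ s : S, μ0 s = 1

variable {S : Type*} [Fintype S] [DecidableEq S]

/-- The edge relation of the Markov chain: positive transition probability. -/
def edgeRel (M : MC S) (a b : S) : Prop := 0 < M.P a b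

/-- The minimum positive transition probability `p_min`. -/
noncomputable def pmin (M : MC S) : ℝ :=
  sInf {x : ℝ | 0 < x ∧ ∃ s s' : S, M.P s s' = x}

/-- A path of the Markov chain: consecutive states have positive transition probability. -/
def IsMPath (M : MC S) (π : List S) : Prop := List.Chain' (edgeRel M) π

/-- A run of the Markov chain. -/
def IsRun (M : MC S) (ρ : ℕ → S) : Prop := ∀ i, 0 < M.P (ρ i) (ρ (i + 1))

/-- The support of a finite sequence of states. -/
def supp (π : List S) : Set S := {s | s ∈ π}

/-- The edge relation of the graph of a finite sequence of states. -/
def listEdge (π : List S) (a b : S) : Prop :=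
  ∃ i, π[i]? = some a ∧ π[i + 1]? = some b

/-- A nonempty set `C` is strongly connected w.r.t. the edge relation `E`
if every state of `C` can reach every other state of `C`. -/
def IsSC (E : S → S → Prop) (C : Set S) : Prop :=
  C.Nonempty ∧ ∀ s ∈ C, ∀ s' ∈ C, Relation.ReflTransGen E s s'

/-- A bottom strongly connected component w.r.t. the edge relation `E`:
a maximal strongly connected set with no edges leaving it. -/
def IsBSCCOf (E : S → S → Prop) (C : Set S) : Prop :=
  IsSC E C ∧ (∀ D : Set S, IsSC E D → C ⊆ D → D = C) ∧
    ∀ s ∈ C, ∀ s' : S, E s s' → s' ∈ C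

/-- `C` is the candidate of the path `π`: the support of some suffix `κ` of `π`
which is a BSCC of the graph of `π`. -/
def IsCand (π : List S) (C : Set S) : Prop :=
  ∃ κ : List S, κ <:+ π ∧ supp κ = C ∧ IsBSCCOf (listEdge π) C

/-- `C` is a `k`-candidate of the path `π` (with real-valued strength `k`):
it is the candidate of `π`, witnessed by a suffix `κ` in which every state of `C`
occurs at least `k` times and the last state occurs at least `k+1` times. -/
def IsKCand (k : ℝ) (π : List S) (C : Set S) : Prop :=
  ∃ κ : List S, κ <:+ π ∧ supp κ = C ∧ IsBSCCOf (listEdge π) C ∧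
    (∀ s ∈ C, k ≤ (κ.count s : ℝ)) ∧
    ∀ s : S, κ.getLast? = some s → k + 1 ≤ (κ.count s : ℝ)

/-- The prefix of length `n` of a run. -/
def pre (ρ : ℕ → S) (n : ℕ) : List S := (List.range n).map ρ

/-- The segment `ρ a, ρ (a+1), …, ρ (b-1)` of a run. -/
def seg (ρ : ℕ → S) (a b : ℕ) : List S := (List.range (b - a)).map (fun l => ρ (a + l))

open Classical in
/-- The candidate `K(π)` of a path (`none` encodes `⊥`). -/
noncomputable def candOf (π : List S) : Option (Set S) :=
  if h : ∃ C : Set S, IsCand π C then some h.choose else none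

/-- The sequence `j ↦ K(s₀⋯s_{j-1})` of candidates of the prefixes of a run. -/
noncomputable def candSeqRaw (ρ : ℕ → S) : ℕ → Option (Set S) :=
  fun j => candOf (pre ρ j)

/-- `j` is a change point of `f : ℕ → Option (Set S)`: `f j` is defined and differs from
the closest previously defined value.  The change points enumerate the candidate
sequence `(K_i)_{i≥1}` (obtained by deleting `⊥`s and consecutive repetitions). -/
def isChange (f : ℕ → Option (Set S)) (j : ℕ) : Prop :=
  f j ≠ none ∧
    ∀ j' < j, f j' ≠ none → (∀ l, j' < l → l < j → f l = none) → f j' ≠ f j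

/-- The number of change points `≤ j`. -/
noncomputable def cpCount (f : ℕ → Option (Set S)) (j : ℕ) : ℕ :=
  {l | l ≤ j ∧ isChange f l}.ncard

/-- `j` is the prefix length at which the `i`-th candidate `K_i` (1-indexed) is born;
if there are fewer than `i` candidates, the final candidate is used
(the convention `K_ℓ := K_j` for `ℓ` beyond the last index `j`). -/
def BirthAt (f : ℕ → Option (Set S)) (i j : ℕ) : Prop :=
  (isChange f j ∧ cpCount f j = i) ∨
    ((¬ ∃ l, isChange f l ∧ cpCount f l = i) ∧ isChange f j ∧
      ∀ l, isChange f l → l ≤ j)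

open Classical in
/-- The `i`-th candidate `K_i` of a run (1-indexed; `none` if undefined). -/
noncomputable def runCand (ρ : ℕ → S) (i : ℕ) : Option (Set S) :=
  if h : ∃ j, BirthAt (candSeqRaw ρ) i j then candSeqRaw ρ h.choose else none

/-- The candidate `K_i` of the run `ρ` is observed as a (strong) `k`-candidate within the
first `n` states of `ρ`: counting only from its birth `b_i` on (that is, on the segment
`b_i γ_i` of the run, which stays inside `K_i`), it is a `k`-candidate. -/
def StrongAtTime (ρ : ℕ → S) (i : ℕ) (k : ℝ) (n : ℕ) : Prop :=
  ∃ (C : Set S) (j : ℕ), BirthAt (candSeqRaw ρ) i j ∧ candSeqRaw ρ j = some C ∧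
    j ≤ n ∧ (∀ l, j - 1 ≤ l → l < n → ρ l ∈ C) ∧ IsKCand k (seg ρ (j - 1) n) C

/-- `K_i` is a strong `k`-candidate of the run `ρ`. -/
def StrongKCand (ρ : ℕ → S) (i : ℕ) (k : ℝ) : Prop := ∃ n, StrongAtTime ρ i k n

/-- The cylinder set of all runs extending the path `π`. -/
def Cyl (π : List S) : Set (ℕ → S) := {ρ | ∀ i s, π[i]? = some s → ρ i = s}

/-- Product of the transition probabilities along a path. -/
noncomputable def transProb (M : MC S) : List S → ℝ
  | [] => 1
  | [_] => 1
  | s :: s' :: rest => M.P s s' * transProb M (s' :: rest)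

/-- The probability `μ(s₀)·∏ P(s_{i-1},s_i)` of a path. -/
noncomputable def pathProb (M : MC S) : List S → ℝ
  | [] => 1
  | s :: rest => M.μ0 s * transProb M (s :: rest)

/-- The event `◊G` that a run visits some state of `G`. -/
def Reach (G : Set S) : Set (ℕ → S) := {ρ | ∃ i, ρ i ∈ G}

/-- The first index `i` with `ρ i = s'` (`∞` if none exists). -/
noncomputable def hitTime (s' : S) (ρ : ℕ → S) : ℝ≥0∞ :=
  sInf ((fun n : ℕ => (n : ℝ≥0∞)) '' {n | ρ n = s'})

/-- The first index `n` by which every state of `C` has been visited (`∞` if never). -/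
noncomputable def coverTime (C : Set S) (ρ : ℕ → S) : ℝ≥0∞ :=
  sInf ((fun n : ℕ => (n : ℝ≥0∞)) '' {n | ∀ c ∈ C, ∃ i ≤ n, ρ i = c})

/-- The chain `M` re-started from the Dirac initial distribution at `u`. -/
def MC.start (M : MC S) (u : S) : MC S where
  P := M.P
  μ0 := fun t => if t = u then 1 else 0
  P_nonneg := M.P_nonneg
  P_row := M.P_row
  μ0_nonneg := fun t => by by_cases h : t = u <;> simp [h]
  μ0_sum := by simp

/-- The strength function `k_i(δ) = (i − log₂ δ)/(−log₂(1 − p_min))`. -/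
noncomputable def kfun (M : MC S) (δ : ℝ) (i : ℝ) : ℝ :=
  (i - Real.logb 2 δ) / (-Real.logb 2 (1 - pmin M))

/-- The set of states occurring infinitely often in a run. -/
def infOft (ρ : ℕ → S) : Set S := {s | {i | ρ i = s}.Infinite}


/-- Theorem 4 of the paper, correctness of `SinglePathMP`.  Let `Cand`
be the (random) candidate for which `SinglePathMP` terminates, `MPhat` its returned
estimate, and `MPC C` the mean payoff of runs ending in `C`.  If
`ℙ[Cand ∉ BSCC] ≤ δ_BSCC` and `ℙ[|MPhat − MP_Cand| > ε ∣ Cand ∈ BSCC] ≤ δ_C`, then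
`ℙ[|MPhat − MP_Cand| > ε] ≤ δ_C + δ_BSCC`; in particular with
`δ_C = δ_BSCC = δ/2` the output of `SinglePathMP` is within `ε` of the mean payoff of the
BSCC of the generated run with probability at least `1 − δ`. -/
theorem singlePathMP_correct [MeasurableSpace S] (M : MC S)
    (r : S → ℝ) (hr : ∀ s : S, r s ∈ Set.Icc (0 : ℝ) 1)
    (Pr : Measure (ℕ → S)) [IsProbabilityMeasure Pr]
    (hPr : ∀ π : List S, Pr (Cyl π) = ENNReal.ofReal (pathProb M π))
    (Cand : (ℕ → S) → Set S) (MPhat : (ℕ → S) → ℝ) (MPC : Set S → ℝ)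
    (δBSCC δC ε : ℝ) (hδB : 0 ≤ δBSCC) (hδC : 0 ≤ δC) (hε : 0 < ε)
    (h1 : Pr {ρ : ℕ → S | ¬ IsBSCCOf (edgeRel M) (Cand ρ)} ≤ ENNReal.ofReal δBSCC)
    (h2 : ProbabilityTheory.cond Pr {ρ : ℕ → S | IsBSCCOf (edgeRel M) (Cand ρ)}
            {ρ : ℕ → S | ε < |MPhat ρ - MPC (Cand ρ)|} ≤ ENNReal.ofReal δC) :
    Pr {ρ : ℕ → S | ε < |MPhat ρ - MPC (Cand ρ)|} ≤ ENNReal.ofReal (δC + δBSCC) := by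
  set B := {ρ : ℕ → S | IsBSCCOf (edgeRel M) (Cand ρ)} with hB
  set E := {ρ : ℕ → S | ε < |MPhat ρ - MPC (Cand ρ)|} with hE
  have hsub : E ⊆ (E ∩ B) ∪ Bᶜ := by
    intro ρ hρ
    by_cases h : ρ ∈ B
    · exact Or.inl ⟨hρ, h⟩
    · exact Or.inr h
  have hcompl : Pr Bᶜ ≤ ENNReal.ofReal δBSCC := h1
  have hEB : Pr (E ∩ B) ≤ ENNReal.ofReal δC := by
    by_cases h0 : Pr B = 0
    · have hz : Pr (E ∩ B) = 0 :=
        le_antisymm (le_trans (measure_mono Set.inter_subset_right) h0.le) bot_le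
      simp [hz]
    · have h1' : Pr (E ∩ B) ≤ Pr.restrict B E := Measure.le_restrict_apply B E
      have h2' : Pr B * ProbabilityTheory.cond Pr B E = Pr.restrict B E := by
        rw [ProbabilityTheory.cond]
        simp only [Measure.smul_apply, smul_eq_mul]
        rw [← mul_assoc, ENNReal.mul_inv_cancel h0 (measure_ne_top Pr B), one_mul]
      calc Pr (E ∩ B) ≤ Pr B * ProbabilityTheory.cond Pr B E := by rw [h2']; exact h1'
        _ ≤ 1 * ENNReal.ofReal δC := mul_le_mul' prob_le_one h2
        _ = ENNReal.ofReal δC := one_mul _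
  calc Pr E ≤ Pr ((E ∩ B) ∪ Bᶜ) := measure_mono hsub
    _ ≤ Pr (E ∩ B) + Pr Bᶜ := measure_union_le _ _
    _ ≤ ENNReal.ofReal δC + ENNReal.ofReal δBSCC := add_le_add hEB hcompl
    _ = ENNReal.ofReal (δC + δBSCC) := (ENNReal.ofReal_add hδC hδB).symm

end SMCPaper
end

section
/- Let M = (S, P, μ) be a Markov chain and ρ a run of M. In the candidate sequence (K_i)_{i≥1} of ρ, each candidate K_{i+1} is either disjoint from K_i or strictly contains K_i together with further states; consequently, the candidate sequence of any run has length at most 2|S| − 1. -/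
open MeasureTheory
open scoped ENNReal

namespace SMCPaper

variable {S : Type*} [Fintype S] [DecidableEq S]

section CandidateHelpers

set_option linter.unusedSectionVars false

open Classical in
private lemma laminar_aux : ∀ (n : ℕ) (X : Finset S) (F : Finset (Finset S)), X.card ≤ n →
    (∀ C ∈ F, C.Nonempty) → (∀ C ∈ F, C ⊆ X) →
    (∀ C ∈ F, ∀ D ∈ F, C ⊆ D ∨ D ⊆ C ∨ Disjoint C D) → X ∉ F →
    F.card ≤ 2 * X.card - 2 := by
  intro n
  induction n with
  | zero =>
    intro X F hXn hne hsub _ _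
    interval_cases h : X.card
    · have hX : X = ∅ := Finset.card_eq_zero.mp h
      have : F = ∅ := by
        apply Finset.eq_empty_of_forall_notMem
        intro C hC
        rcases hne C hC with ⟨x, hx⟩
        exact absurd (hsub C hC hx) (by simp [hX])
      simp [this]
  | succ n ih =>
    intro X F hXn hne hsub hlam hXF
    rcases Finset.eq_empty_or_nonempty F with rfl | hFne
    · simp
    classical
    set Max : Finset (Finset S) := F.filter (fun M => ∀ B ∈ F, M ⊆ B → B = M) with hMax
    have hbelow : ∀ A ∈ F, ∃ M ∈ Max, A ⊆ M := by
      intro A hA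
      have hG : (F.filter (fun B => A ⊆ B)).Nonempty := ⟨A, by simp [hA]⟩
      obtain ⟨M, hMm⟩ := Finset.exists_maximal hG
      have hM : M ∈ F.filter (fun B => A ⊆ B) := hMm.1
      have hmax : ∀ B ∈ F.filter (fun B => A ⊆ B), ¬ M < B :=
        fun B hB hlt => lt_irrefl M (lt_of_lt_of_le hlt (hMm.2 hB hlt.le))
      rw [Finset.mem_filter] at hM
      refine ⟨M, ?_, hM.2⟩
      rw [hMax, Finset.mem_filter]
      refine ⟨hM.1, fun B hB hMB => ?_⟩
      have hB' : B ∈ F.filter (fun B => A ⊆ B) := by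
        simp [hB, hM.2.trans hMB]
      have := hmax B hB'
      by_contra hne'
      exact this (lt_of_le_of_ne hMB (fun e => hne' e.symm))
    have hMaxF : ∀ M ∈ Max, M ∈ F := fun M hM => (Finset.mem_filter.mp hM).1
    have hMaxmax : ∀ M ∈ Max, ∀ B ∈ F, M ⊆ B → B = M :=
      fun M hM => (Finset.mem_filter.mp hM).2
    have hdisj : ∀ M ∈ Max, ∀ M' ∈ Max, M ≠ M' → Disjoint M M' := by
      intro M hM M' hM' hne'
      rcases hlam M (hMaxF M hM) M' (hMaxF M' hM') with h | h | h
      · exact absurd (hMaxmax M hM M' (hMaxF M' hM') h) (Ne.symm hne')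
      · exact absurd (hMaxmax M' hM' M (hMaxF M hM) h) hne'
      · exact h
    set child : Finset S → Finset (Finset S) :=
      fun M => F.filter (fun A => A ⊆ M ∧ A ≠ M) with hchild
    have hcover : F ⊆ Max ∪ Max.biUnion child := by
      intro A hA
      rcases hbelow A hA with ⟨M, hM, hAM⟩
      by_cases hAe : A = M
      · exact Finset.mem_union_left _ (hAe ▸ hM)
      · exact Finset.mem_union_right _
          (Finset.mem_biUnion.mpr ⟨M, hM, by simp [hchild, hA, hAM, hAe]⟩)
    have hchildbound : ∀ M ∈ Max, (child M).card ≤ 2 * M.card - 2 := by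
      intro M hM
      have hMX : M ⊂ X := by
        refine Finset.ssubset_iff_subset_ne.mpr ⟨hsub M (hMaxF M hM), ?_⟩
        intro e; exact hXF (e ▸ hMaxF M hM)
      have hMn : M.card ≤ n := by
        have := Finset.card_lt_card hMX
        omega
      apply ih M (child M) hMn
      · intro C hC; exact hne C (Finset.mem_filter.mp hC).1
      · intro C hC; exact (Finset.mem_filter.mp hC).2.1
      · intro C hC D hD
        exact hlam C (Finset.mem_filter.mp hC).1 D (Finset.mem_filter.mp hD).1
      · intro h; exact (Finset.mem_filter.mp h).2.2 rfl
    have hcard : F.card ≤ Max.card + ∑ M ∈ Max, (child M).card := by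
      calc F.card ≤ (Max ∪ Max.biUnion child).card := Finset.card_le_card hcover
        _ ≤ Max.card + (Max.biUnion child).card := Finset.card_union_le _ _
        _ ≤ Max.card + ∑ M ∈ Max, (child M).card := by
            gcongr; exact Finset.card_biUnion_le
    set k := Max.card with hk
    set s := ∑ M ∈ Max, M.card with hs
    have hMne : ∀ M ∈ Max, 1 ≤ M.card := by
      intro M hM; exact Finset.card_pos.mpr (hne M (hMaxF M hM))
    have hks : k ≤ s := by
      rw [hk, hs]
      calc Max.card = ∑ _M ∈ Max, 1 := by simp
        _ ≤ ∑ M ∈ Max, M.card := Finset.sum_le_sum hMne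
    have hsX : s ≤ X.card := by
      rw [hs, ← Finset.card_biUnion hdisj]
      apply Finset.card_le_card
      intro x hx
      rcases Finset.mem_biUnion.mp hx with ⟨M, hM, hxM⟩
      exact hsub M (hMaxF M hM) hxM
    have hsum2 : ∑ M ∈ Max, (child M).card ≤ 2 * s - 2 * k := by
      calc ∑ M ∈ Max, (child M).card ≤ ∑ M ∈ Max, (2 * M.card - 2) :=
            Finset.sum_le_sum hchildbound
        _ = ∑ M ∈ Max, (2 * M.card) - ∑ _M ∈ Max, 2 := by
            rw [eq_comm]
            apply Nat.sub_eq_of_eq_add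
            rw [← Finset.sum_add_distrib]
            apply Finset.sum_congr rfl
            intro M hM
            have := hMne M hM
            omega
        _ = 2 * s - 2 * k := by rw [hs, ← Finset.mul_sum]; simp [mul_comm, hk]
    have hkpos : 1 ≤ k := by
      rw [hk]
      apply Finset.card_pos.mpr
      rcases hFne with ⟨A, hA⟩
      rcases hbelow A hA with ⟨M, hM, _⟩
      exact ⟨M, hM⟩
    have honeM : k = 1 → s < X.card := by
      intro hk1
      rcases Finset.card_eq_one.mp (hk ▸ hk1) with ⟨M, hM⟩
      have hMMax : M ∈ Max := by simp [hM]
      have hMX : M ⊂ X := by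
        refine Finset.ssubset_iff_subset_ne.mpr ⟨hsub M (hMaxF M hMMax), ?_⟩
        intro e; exact hXF (e ▸ hMaxF M hMMax)
      have : s = M.card := by rw [hs, hM]; simp
      rw [this]
      exact Finset.card_lt_card hMX
    have : F.card ≤ k + (2 * s - 2 * k) := le_trans hcard (by omega)
    by_cases hk1 : k = 1
    · have := honeM hk1; omega
    · omega

private lemma laminar_bound (F : Finset (Finset S)) (hne : ∀ C ∈ F, C.Nonempty)
    (hlam : ∀ C ∈ F, ∀ D ∈ F, C ⊆ D ∨ D ⊆ C ∨ Disjoint C D) :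
    F.card ≤ 2 * Fintype.card S - 1 := by
  classical
  rcases Finset.eq_empty_or_nonempty F with rfl | hFne
  · simp
  have hcard1 : 1 ≤ Fintype.card S := by
    rcases hFne with ⟨A, hA⟩
    rcases hne A hA with ⟨x, _⟩
    exact Fintype.card_pos_iff.mpr ⟨x⟩
  have h2 := laminar_aux (Fintype.card S) Finset.univ (F.erase Finset.univ) le_rfl
    (fun C hC => hne C (Finset.mem_of_mem_erase hC))
    (fun C _ => Finset.subset_univ C)
    (fun C hC D hD => hlam C (Finset.mem_of_mem_erase hC) D (Finset.mem_of_mem_erase hD))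
    (Finset.notMem_erase _ _)
  have h3 : F.card ≤ (F.erase Finset.univ).card + 1 := by
    by_cases h : Finset.univ ∈ F
    · rw [Finset.card_erase_of_mem h]; omega
    · rw [Finset.erase_eq_of_notMem h]; omega
  rw [Finset.card_univ] at h2
  omega

private lemma candOf_some {π : List S} {C : Set S} (h : candOf π = some C) : IsCand π C := by
  unfold candOf at h
  split at h
  · next hex => rw [Option.some_inj] at h; exact h ▸ hex.choose_spec
  · exact absurd h (by simp)

private lemma pre_length (ρ : ℕ → S) (n : ℕ) : (pre ρ n).length = n := by simp [pre]

private lemma pre_get?_eq (ρ : ℕ → S) {n i : ℕ} (h : i < n) :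
    (pre ρ n)[i]? = some (ρ i) := by
  simp [pre, h]

private lemma pre_get?_some_iff {ρ : ℕ → S} {n i : ℕ} {a : S} :
    (pre ρ n)[i]? = some a ↔ i < n ∧ ρ i = a := by
  by_cases h : i < n
  · rw [pre_get?_eq ρ h]; simp [h]
  · rw [List.getElem?_eq_none_iff.mpr (by rw [pre_length]; omega)]
    simp; omega

private lemma reach_closed {E : S → S → Prop} {C : Set S}
    (hcl : ∀ s ∈ C, ∀ s', E s s' → s' ∈ C) {a b : S}
    (h : Relation.ReflTransGen E a b) (ha : a ∈ C) : b ∈ C := by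
  induction h with
  | refl => exact ha
  | tail _ he ih => exact hcl _ ih _ he

private lemma cand_facts {ρ : ℕ → S} {j : ℕ} {C : Set S} (h : IsCand (pre ρ j) C) :
    C.Nonempty ∧ 1 ≤ j ∧ ρ (j - 1) ∈ C ∧ (∀ s ∈ C, ∃ p < j, ρ p = s) := by
  obtain ⟨κ, ⟨t, ht⟩, hsupp, hbscc⟩ := h
  have hCne : C.Nonempty := hbscc.1.1
  have hκne : κ ≠ [] := by
    rcases hCne with ⟨x, hx⟩
    rw [← hsupp] at hx
    intro e; rw [e] at hx; exact absurd hx (by simp [supp])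
  have hlen : t.length + κ.length = j := by
    have := congrArg List.length ht
    simpa [pre_length] using this
  have hκpos : 1 ≤ κ.length := List.length_pos_iff.mpr hκne
  have hj1 : 1 ≤ j := by omega
  refine ⟨hCne, hj1, ?_, ?_⟩
  · have h1 : (pre ρ j)[j - 1]? = some (ρ (j - 1)) := pre_get?_eq ρ (by omega)
    rw [← ht] at h1
    have h2 : (t ++ κ)[j - 1]? = κ[j - 1 - t.length]? :=
      List.getElem?_append_right (by omega)
    rw [h2] at h1
    have : ρ (j - 1) ∈ κ := List.mem_of_getElem? h1
    rw [← hsupp]; exact this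
  · intro s hs
    rw [← hsupp] at hs
    have hmem : s ∈ pre ρ j := (List.IsSuffix.subset ⟨t, ht⟩) hs
    simp only [pre, List.mem_map, List.mem_range] at hmem
    obtain ⟨p, hp, he⟩ := hmem
    exact ⟨p, hp, he⟩

private lemma listEdge_mono {ρ : ℕ → S} {j j' : ℕ} (h : j ≤ j') :
    ∀ a b, listEdge (pre ρ j) a b → listEdge (pre ρ j') a b := by
  intro a b ⟨i, h1, h2⟩
  rw [pre_get?_some_iff] at h1 h2
  exact ⟨i, pre_get?_some_iff.mpr ⟨by omega, h1.2⟩,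
    pre_get?_some_iff.mpr ⟨by omega, h2.2⟩⟩

private lemma cand_closure {ρ : ℕ → S} {j' : ℕ} {C' : Set S} (h : IsCand (pre ρ j') C')
    {p : ℕ} (hp : ρ p ∈ C') : ∀ l, p ≤ l → l < j' → ρ l ∈ C' := by
  obtain ⟨κ, hsfx, hsupp, hbscc⟩ := h
  intro l hl hlj
  induction l with
  | zero =>
    have : p = 0 := by omega
    exact this ▸ hp
  | succ m ihm =>
    by_cases hpm : p = m + 1
    · exact hpm ▸ hp
    · have hm : ρ m ∈ C' := ihm (by omega) (by omega)
      apply hbscc.2.2 (ρ m) hm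
      exact ⟨m, pre_get?_eq ρ (by omega), pre_get?_eq ρ hlj⟩

private lemma cand_subset {ρ : ℕ → S} {j j' : ℕ} {C C' : Set S} (hjj : j ≤ j')
    (hC : IsCand (pre ρ j) C) (hC' : IsCand (pre ρ j') C')
    (hint : (C ∩ C').Nonempty) : C ⊆ C' := by
  obtain ⟨s, hsC, hsC'⟩ := hint
  obtain ⟨_, hj1, hlast, hocc⟩ := cand_facts hC
  obtain ⟨p, hpj, hps⟩ := hocc s hsC
  have hlastC' : ρ (j - 1) ∈ C' :=
    cand_closure hC' (hps ▸ hsC') (j - 1) (by omega) (by omega)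
  intro t htC
  obtain ⟨κ, hsfx, hsupp, hbscc⟩ := hC
  obtain ⟨κ', hsfx', hsupp', hbscc'⟩ := hC'
  have hreach : Relation.ReflTransGen (listEdge (pre ρ j)) (ρ (j - 1)) t :=
    hbscc.1.2 (ρ (j - 1)) hlast t htC
  have hreach' : Relation.ReflTransGen (listEdge (pre ρ j')) (ρ (j - 1)) t :=
    Relation.ReflTransGen.mono (fun a b => listEdge_mono hjj a b) _ _ hreach
  exact reach_closed hbscc'.2.2 hreach' hlastC'

private lemma cpCount_mono (f : ℕ → Option (Set S)) {j j' : ℕ} (h : j ≤ j') :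
    cpCount f j ≤ cpCount f j' := by
  apply Set.ncard_le_ncard
  · intro l hl; exact ⟨le_trans hl.1 h, hl.2⟩
  · exact (Set.finite_Iic j').subset (fun l hl => hl.1)

private lemma change_ne {ρ : ℕ → S} {j j' : ℕ} (hj : isChange (candSeqRaw ρ) j)
    (hj' : isChange (candSeqRaw ρ) j') (hlt : j < j') {C C' : Set S}
    (hC : candSeqRaw ρ j = some C) (hC' : candSeqRaw ρ j' = some C') : C ≠ C' := by
  classical
  intro heq
  set f := candSeqRaw ρ with hf
  set T : Finset ℕ := (Finset.range j').filter (fun l => f l ≠ none) with hT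
  have hjT : j ∈ T := by
    rw [hT]; simp only [Finset.mem_filter, Finset.mem_range]
    exact ⟨hlt, by rw [hC]; simp⟩
  have hTne : T.Nonempty := ⟨j, hjT⟩
  set p := T.max' hTne with hp
  have hpT : p ∈ T := T.max'_mem hTne
  rw [hT, Finset.mem_filter, Finset.mem_range] at hpT
  obtain ⟨hpj', hpdef⟩ := hpT
  have hjp : j ≤ p := T.le_max' j hjT
  have hgap : ∀ l, p < l → l < j' → f l = none := by
    intro l h1 h2
    by_contra hne
    have : l ∈ T := by
      rw [hT]; simp only [Finset.mem_filter, Finset.mem_range]; exact ⟨h2, hne⟩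
    exact absurd (T.le_max' l this) (by omega)
  have hpne : f p ≠ f j' := hj'.2 p hpj' hpdef hgap
  obtain ⟨D₀, hD₀⟩ := Option.ne_none_iff_exists'.mp hpdef
  have hCc : IsCand (pre ρ j) C := candOf_some hC
  have hC'c : IsCand (pre ρ j') C' := candOf_some hC'
  have hDc : IsCand (pre ρ p) D₀ := candOf_some hD₀
  obtain ⟨hCne, hj1, _, hocc⟩ := cand_facts hCc
  obtain ⟨_, hp1, hplast, _⟩ := cand_facts hDc
  obtain ⟨s₀, hs₀⟩ := hCne
  obtain ⟨p₀, hp₀j, hp₀s⟩ := hocc s₀ hs₀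
  have hlastC' : ρ (p - 1) ∈ C' :=
    cand_closure hC'c (hp₀s ▸ (heq ▸ hs₀)) (p - 1) (by omega) (by omega)
  have h1 : D₀ ⊆ C' := cand_subset (le_of_lt hpj') hDc hC'c ⟨ρ (p - 1), hplast, hlastC'⟩
  have h2 : C ⊆ D₀ := cand_subset hjp hCc hDc ⟨ρ (p - 1), heq ▸ hlastC', hplast⟩
  have hDC : D₀ = C' := Set.Subset.antisymm h1 (heq ▸ h2)
  exact hpne (by rw [hD₀, hC', hDC])

end CandidateHelpers

/-- Along any run `ρ` of `M`, each candidate `K_{i+1}` of the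
candidate sequence is either disjoint from `K_i` or strictly contains `K_i`;
consequently the candidate sequence of a run (enumerated by the change points of
`j ↦ K(s₀⋯s_{j-1})`) has length at most `2|S| − 1`. -/
theorem candidate_sequence_length (M : MC S) (ρ : ℕ → S) (hρ : IsRun M ρ) :
    (∀ (i j j' : ℕ) (C C' : Set S), 1 ≤ i →
        isChange (candSeqRaw ρ) j → cpCount (candSeqRaw ρ) j = i →
        isChange (candSeqRaw ρ) j' → cpCount (candSeqRaw ρ) j' = i + 1 →
        candSeqRaw ρ j = some C → candSeqRaw ρ j' = some C' →
        (Disjoint C C' ∨ C ⊂ C')) ∧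
      {j | isChange (candSeqRaw ρ) j}.Finite ∧
      {j | isChange (candSeqRaw ρ) j}.ncard ≤ 2 * Fintype.card S - 1 := by
  classical
  have key : ∀ {j j' : ℕ} {C C' : Set S}, isChange (candSeqRaw ρ) j →
      isChange (candSeqRaw ρ) j' → j < j' → candSeqRaw ρ j = some C →
      candSeqRaw ρ j' = some C' → Disjoint C C' ∨ C ⊂ C' := by
    intro j j' C C' hj hj' hlt hC hC'
    by_cases hd : Disjoint C C'
    · exact Or.inl hd
    · right
      rw [Set.not_disjoint_iff_nonempty_inter] at hd
      exact HasSubset.Subset.ssubset_of_ne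
        (cand_subset (le_of_lt hlt) (candOf_some hC) (candOf_some hC') hd)
        (change_ne hj hj' hlt hC hC')
  constructor
  · intro i j j' C C' _ hj hcj hj' hcj' hC hC'
    have hlt : j < j' := by
      by_contra h
      have := cpCount_mono (candSeqRaw ρ) (le_of_not_gt h)
      omega
    exact key hj hj' hlt hC hC'
  · set T : Set ℕ := {j | isChange (candSeqRaw ρ) j} with hTdef
    set φ : ℕ → Finset S := fun j => ((candSeqRaw ρ j).getD ∅).toFinite.toFinset with hφ
    have hsome : ∀ j ∈ T, ∃ C : Set S, candSeqRaw ρ j = some C := by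
      intro j hj
      exact Option.ne_none_iff_exists'.mp hj.1
    have hφval : ∀ {j : ℕ} {C : Set S}, candSeqRaw ρ j = some C →
        ∀ x, x ∈ φ j ↔ x ∈ C := by
      intro j C hC x
      rw [hφ]
      simp only [hC, Option.getD_some, Set.Finite.mem_toFinset]
    have hinj : Set.InjOn φ T := by
      intro j hj j' hj' hφe
      by_contra hne
      obtain ⟨C, hC⟩ := hsome j hj
      obtain ⟨C', hC'⟩ := hsome j' hj'
      have hCC' : C = C' := by
        ext x
        rw [← hφval hC x, ← hφval hC' x, hφe]
      rcases lt_or_gt_of_ne hne with h | h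
      · exact change_ne hj hj' h hC hC' hCC'
      · exact change_ne hj' hj h hC' hC hCC'.symm
    have hTfin : T.Finite := Set.Finite.of_finite_image (Set.toFinite _) hinj
    refine ⟨hTfin, ?_⟩
    have himg : T.ncard = (φ '' T).ncard := (Set.ncard_image_of_injOn hinj).symm
    set G : Finset (Finset S) := (φ '' T).toFinite.toFinset with hG
    have hGcard : (φ '' T).ncard = G.card := by
      rw [hG, Set.ncard_eq_toFinset_card _ (φ '' T).toFinite]
    have hmemG : ∀ X ∈ G, ∃ j ∈ T, ∃ C : Set S, candSeqRaw ρ j = some C ∧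
        (∀ x, x ∈ X ↔ x ∈ C) := by
      intro X hX
      rw [hG, Set.Finite.mem_toFinset] at hX
      obtain ⟨j, hj, hje⟩ := hX
      obtain ⟨C, hC⟩ := hsome j hj
      exact ⟨j, hj, C, hC, fun x => by rw [← hje]; exact hφval hC x⟩
    have hbound := laminar_bound G
      (by
        intro X hX
        obtain ⟨j, hj, C, hC, hiff⟩ := hmemG X hX
        obtain ⟨⟨x, hx⟩, _, _, _⟩ := cand_facts (candOf_some hC)
        exact ⟨x, (hiff x).mpr hx⟩)
      (by
        intro X hX Y hY
        obtain ⟨j, hj, C, hC, hiff⟩ := hmemG X hX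
        obtain ⟨j', hj', C', hC', hiff'⟩ := hmemG Y hY
        rcases lt_trichotomy j j' with h | h | h
        · rcases key hj hj' h hC hC' with hd | hss
          · refine Or.inr (Or.inr (Finset.disjoint_left.mpr ?_))
            intro x hx hx'
            exact Set.disjoint_left.mp hd ((hiff x).mp hx) ((hiff' x).mp hx')
          · exact Or.inl (fun x hx => (hiff' x).mpr (hss.1 ((hiff x).mp hx)))
        · subst h
          rw [hC] at hC'
          rw [Option.some_inj] at hC'
          subst hC'
          exact Or.inl (fun x hx => (hiff' x).mpr ((hiff x).mp hx))
        · rcases key hj' hj h hC' hC with hd | hss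
          · refine Or.inr (Or.inr (Finset.disjoint_left.mpr ?_))
            intro x hx hx'
            exact Set.disjoint_left.mp hd ((hiff' x).mp hx') ((hiff x).mp hx)
          · exact Or.inr (Or.inl (fun x hx => (hiff x).mpr (hss.1 ((hiff' x).mp hx)))))
    rw [himg, hGcard]
    exact hbound


end SMCPaper
end
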